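/- Let A be a finite-dimensional F-algebra with Kemer index Ind(A) = (α, s) and parameter Par(A) = (d(A), n_A − 1), where d(A) = dim_F Ā and n_A is the nilpotency index of J(A). Then Ind(A) ≤ Par(A) in the lexicographic order. -/

import Mathlib

noncomputable section

open FreeAlgebra

variable (F : Type) [Field F]

/-- The monomials (words) appearing in an element of the free algebra F⟨x₀,x₁,…⟩. -/
def supportWords (f : FreeAlgebra F ℕ) : Finset (FreeMonoid ℕ) :=
  ((FreeAlgebra.equivMonoidAlgebraFreeMonoid (R := F) (X := ℕ)) f).coeff.support

/-- `f` is multilinear on the set of variables `s`: each variable of `s` occurs exactly once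
in every monomial of `f`. -/
def MultilinearOn (s : Finset ℕ) (f : FreeAlgebra F ℕ) : Prop :=
  ∀ w ∈ supportWords F f, ∀ i ∈ s, (FreeMonoid.toList w).count i = 1

/-- `f` is a multilinear polynomial: no variable is repeated in a monomial of `f`, and all
monomials of `f` involve the same set of variables. -/
def IsMultilinear (f : FreeAlgebra F ℕ) : Prop :=
  (∀ w ∈ supportWords F f, (FreeMonoid.toList w).Nodup) ∧
  (∀ w ∈ supportWords F f, ∀ w' ∈ supportWords F f,
    (FreeMonoid.toList w).toFinset = (FreeMonoid.toList w').toFinset)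

/-- Substitution (the endomorphism of the free algebra sending the variable `k` to `σ k`). -/
def subst (σ : ℕ → FreeAlgebra F ℕ) : FreeAlgebra F ℕ →ₐ[F] FreeAlgebra F ℕ :=
  FreeAlgebra.lift F σ

/-- The substitution identifying the variable `j` with the variable `i`. -/
def identVar (i j : ℕ) : FreeAlgebra F ℕ →ₐ[F] FreeAlgebra F ℕ :=
  subst F (fun k => if k = j then FreeAlgebra.ι F i else FreeAlgebra.ι F k)

/-- `f` is alternating on the set of variables `s`: it is multilinear on `s` and vanishes
whenever two distinct variables of `s` are identified (equivalently, whenever two variables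
of `s` receive equal values). -/
def AltOn (s : Finset ℕ) (f : FreeAlgebra F ℕ) : Prop :=
  MultilinearOn F s f ∧ ∀ i ∈ s, ∀ j ∈ s, i ≠ j → identVar F i j f = 0

/-- Outside `Γ` there is a multilinear polynomial with `ν` disjoint alternating sets of
cardinality `r` ("small sets") and `j` further disjoint alternating sets of cardinality
`r + 1` ("big sets"). -/
def HasConfig (Γ : Set (FreeAlgebra F ℕ)) (ν r j : ℕ) : Prop :=
  ∃ f ∉ Γ, IsMultilinear F f ∧
    ∃ (S : Fin ν → Finset ℕ) (T : Fin j → Finset ℕ),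
      (∀ a b, a ≠ b → Disjoint (S a) (S b)) ∧
      (∀ a b, a ≠ b → Disjoint (T a) (T b)) ∧
      (∀ a b, Disjoint (S a) (T b)) ∧
      (∀ a, (S a).card = r ∧ AltOn F (S a) f) ∧
      (∀ b, (T b).card = r + 1 ∧ AltOn F (T b) f)

/-- `Γ` has Kemer index `(d, s)`: `d` is the largest integer such that for every `ν` some
multilinear polynomial outside `Γ` has `ν` disjoint alternating sets of cardinality `d`, and
`s` is the largest integer such that for every `ν` some multilinear polynomial outside `Γ`
has `ν` disjoint alternating sets of cardinality `d` together with `s` further disjoint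
alternating sets of cardinality `d + 1`. -/
def KemerIndex (Γ : Set (FreeAlgebra F ℕ)) (d s : ℕ) : Prop :=
  (∀ ν, HasConfig F Γ ν d 0) ∧ ¬ (∀ ν, HasConfig F Γ ν (d + 1) 0) ∧
  (∀ ν, HasConfig F Γ ν d s) ∧ ¬ (∀ ν, HasConfig F Γ ν d (s + 1))

/-- The T-ideal of identities of the (unital) F-algebra W. -/
def IdSet (W : Type) [Ring W] [Algebra F W] : Set (FreeAlgebra F ℕ) :=
  {f | ∀ φ : FreeAlgebra F ℕ →ₐ[F] W, φ f = 0}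

end
set_option linter.unusedSectionVars false

noncomputable section Test

open FreeAlgebra

variable {F : Type} [Field F] {A : Type} [Ring A] [Algebra F A]

def wordEval (a : ℕ → A) (w : FreeMonoid ℕ) : A :=
  ((FreeMonoid.toList w).map a).prod

def coeffs (f : FreeAlgebra F ℕ) : MonoidAlgebra F (FreeMonoid ℕ) :=
  (FreeAlgebra.equivMonoidAlgebraFreeMonoid (R := F) (X := ℕ)) f

lemma eval_eq (a : ℕ → A) (f : FreeAlgebra F ℕ) :
    FreeAlgebra.lift F a f = ∑ w ∈ supportWords F f, (coeffs f).coeff w • wordEval a w := by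
  have h : ((MonoidAlgebra.lift F A (FreeMonoid ℕ)) (FreeMonoid.lift a)).comp
      (FreeAlgebra.equivMonoidAlgebraFreeMonoid (R := F) (X := ℕ)).toAlgHom
      = FreeAlgebra.lift F a := by
    apply FreeAlgebra.hom_ext
    funext n
    simp [FreeAlgebra.equivMonoidAlgebraFreeMonoid, FreeAlgebra.lift_ι_apply]
  calc FreeAlgebra.lift F a f
      = ((MonoidAlgebra.lift F A (FreeMonoid ℕ)) (FreeMonoid.lift a)) (coeffs f) := by
        rw [← h]; rfl
    _ = (coeffs f).coeff.sum fun w b => b • FreeMonoid.lift a w := MonoidAlgebra.lift_apply _ _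
    _ = ∑ w ∈ supportWords F f, (coeffs f).coeff w • wordEval a w := by
        rw [Finsupp.sum]
        exact Finset.sum_congr rfl fun w _ => by rw [FreeMonoid.lift_apply]; rfl

end Test
section Test2

open FreeAlgebra

variable {F : Type} [Field F] {A : Type} [Ring A] [Algebra F A]

lemma count_one_split {l : List ℕ} {i : ℕ} (h : l.count i = 1) :
    ∃ l1 l2, l = l1 ++ i :: l2 ∧ i ∉ l1 ∧ i ∉ l2 := by
  have hm : i ∈ l := by
    rw [← List.count_pos_iff]; omega
  obtain ⟨l1, l2, rfl⟩ := List.append_of_mem hm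
  rw [List.count_append, List.count_cons_self] at h
  refine ⟨l1, l2, rfl, ?_, ?_⟩
  · intro hmem
    have : 0 < l1.count i := List.count_pos_iff.mpr hmem
    omega
  · intro hmem
    have : 0 < l2.count i := List.count_pos_iff.mpr hmem
    omega

lemma wordEval_update (a : ℕ → A) {i : ℕ} {w : FreeMonoid ℕ}
    (h : (FreeMonoid.toList w).count i = 1) :
    ∃ P Q : A, ∀ z, wordEval (Function.update a i z) w = P * z * Q := by
  obtain ⟨l1, l2, hw, h1, h2⟩ := count_one_split h
  refine ⟨(l1.map a).prod, (l2.map a).prod, fun z => ?_⟩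
  unfold wordEval
  rw [hw, List.map_append, List.map_cons, List.prod_append, List.prod_cons]
  rw [Function.update_self]
  have e1 : l1.map (Function.update a i z) = l1.map a :=
    List.map_congr_left fun b hb => Function.update_of_ne (by rintro rfl; exact h1 hb) _ _
  have e2 : l2.map (Function.update a i z) = l2.map a :=
    List.map_congr_left fun b hb => Function.update_of_ne (by rintro rfl; exact h2 hb) _ _
  rw [e1, e2, mul_assoc]

lemma lift_update_add (f : FreeAlgebra F ℕ) {i : ℕ}
    (h : ∀ w ∈ supportWords F f, (FreeMonoid.toList w).count i = 1)
    (a : ℕ → A) (x y : A) :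
    FreeAlgebra.lift F (Function.update a i (x + y)) f
      = FreeAlgebra.lift F (Function.update a i x) f
        + FreeAlgebra.lift F (Function.update a i y) f := by
  rw [eval_eq, eval_eq, eval_eq, ← Finset.sum_add_distrib]
  refine Finset.sum_congr rfl fun w hw => ?_
  obtain ⟨P, Q, hPQ⟩ := wordEval_update a (h w hw)
  rw [hPQ, hPQ, hPQ, mul_add, add_mul, smul_add]

lemma lift_update_smul (f : FreeAlgebra F ℕ) {i : ℕ}
    (h : ∀ w ∈ supportWords F f, (FreeMonoid.toList w).count i = 1)
    (a : ℕ → A) (c : F) (x : A) :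
    FreeAlgebra.lift F (Function.update a i (c • x)) f
      = c • FreeAlgebra.lift F (Function.update a i x) f := by
  rw [eval_eq, eval_eq, Finset.smul_sum]
  refine Finset.sum_congr rfl fun w hw => ?_
  obtain ⟨P, Q, hPQ⟩ := wordEval_update a (h w hw)
  rw [hPQ, hPQ, mul_smul_comm, smul_mul_assoc, smul_comm]

lemma lift_identVar (b : ℕ → A) (i j : ℕ) (f : FreeAlgebra F ℕ) :
    FreeAlgebra.lift F b (identVar F i j f)
      = FreeAlgebra.lift F (fun k => if k = j then b i else b k) f := by
  have h : ((FreeAlgebra.lift F b).comp (identVar F i j))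
      = FreeAlgebra.lift F (fun k => if k = j then b i else b k) := by
    apply FreeAlgebra.hom_ext
    funext k
    simp only [Function.comp_apply, AlgHom.coe_comp, identVar, subst,
      FreeAlgebra.lift_ι_apply]
    split <;> simp [FreeAlgebra.lift_ι_apply]
  exact congrFun (congrArg DFunLike.coe h) f

lemma lift_eq_zero_of_eq {T : Finset ℕ} {f : FreeAlgebra F ℕ} (halt : AltOn F T f)
    (b : ℕ → A) {i j : ℕ} (hi : i ∈ T) (hj : j ∈ T) (hij : i ≠ j) (hbij : b j = b i) :
    FreeAlgebra.lift F b f = 0 := by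
  have h0 := halt.2 i hi j hj hij
  have hb : FreeAlgebra.lift F b f = FreeAlgebra.lift F b (identVar F i j f) := by
    rw [lift_identVar]
    have he : (fun k => if k = j then b i else b k) = b := by
      funext k
      split
      · next hk => rw [hk, hbij]
      · rfl
    rw [he]
  rw [hb, h0, map_zero]

end Test2
section Test3

open FreeAlgebra

variable {F : Type} [Field F] {A : Type} [Ring A] [Algebra F A]

lemma dite_update_eq {T : Finset ℕ} [DecidableEq {n // n ∈ T}] (m : {n // n ∈ T} → A)
    (a : ℕ → A) (i : {n // n ∈ T}) (x : A) :
    (fun n => if h : n ∈ T then (Function.update m i x) ⟨n, h⟩ else a n)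
      = Function.update (fun n => if h : n ∈ T then m ⟨n, h⟩ else a n) (i : ℕ) x := by
  funext n
  by_cases hn : n ∈ T
  · simp only [hn, dite_true]
    by_cases hni : n = (i : ℕ)
    · subst hni
      have hsub : (⟨(i : ℕ), hn⟩ : {n // n ∈ T}) = i := Subtype.ext rfl
      rw [hsub, Function.update_self, Function.update_self]
    · rw [Function.update_of_ne hni,
        Function.update_of_ne (fun hc => hni (congrArg Subtype.val hc))]
      simp only [hn, dite_true]
  · have hni : n ≠ (i : ℕ) := fun h => hn (h ▸ i.2)
    rw [Function.update_of_ne hni]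
    simp [hn]

lemma lift_eq_zero_of_semisimple [FiniteDimensional F A] (S : Subalgebra F A)
    {T : Finset ℕ} {f : FreeAlgebra F ℕ} (halt : AltOn F T f)
    (hcard : Module.finrank F ↥S < T.card)
    (a : ℕ → A) (hmem : ∀ i ∈ T, a i ∈ S) :
    FreeAlgebra.lift F a f = 0 := by
  classical
  set g : A [⋀^({n // n ∈ T})]→ₗ[F] A :=
    { toFun := fun v => FreeAlgebra.lift F (fun n => if h : n ∈ T then v ⟨n, h⟩ else a n) f
      map_update_add' := by
        intro _inst m i x y
        have hi : (i : ℕ) ∈ T := i.2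
        show FreeAlgebra.lift F
            (fun n => if h : n ∈ T then Function.update m i (x + y) ⟨n, h⟩ else a n) f
          = FreeAlgebra.lift F
              (fun n => if h : n ∈ T then Function.update m i x ⟨n, h⟩ else a n) f
            + FreeAlgebra.lift F
              (fun n => if h : n ∈ T then Function.update m i y ⟨n, h⟩ else a n) f
        rw [dite_update_eq, dite_update_eq, dite_update_eq]
        exact lift_update_add f (fun w hw => halt.1 w hw _ hi) _ x y
      map_update_smul' := by
        intro _inst m i c x
        have hi : (i : ℕ) ∈ T := i.2
        show FreeAlgebra.lift F
            (fun n => if h : n ∈ T then Function.update m i (c • x) ⟨n, h⟩ else a n) f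
          = c • FreeAlgebra.lift F
              (fun n => if h : n ∈ T then Function.update m i x ⟨n, h⟩ else a n) f
        rw [dite_update_eq, dite_update_eq]
        exact lift_update_smul f (fun w hw => halt.1 w hw _ hi) _ c x
      map_eq_zero_of_eq' := by
        intro v i j hv hij
        refine lift_eq_zero_of_eq halt _ i.2 j.2
          (fun hc => hij (Subtype.ext hc)) ?_
        simp only [j.2, i.2, dite_true]
        exact hv.symm }
    with hg
  have hbase : (fun n => if _h : n ∈ T then a n else a n) = a := by
    funext n; split <;> rfl
  have h1 : g (fun i => a ↑i) = FreeAlgebra.lift F a f := by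
    show FreeAlgebra.lift F (fun n => if h : n ∈ T then a n else a n) f = _
    rw [hbase]
  rw [← h1]
  apply AlternatingMap.map_linearDependent
  intro hind
  set v : {n // n ∈ T} → ↥S := fun i => ⟨a ↑i, hmem ↑i i.2⟩ with hv
  have hcomp : (fun i : {n // n ∈ T} => a ↑i) = (S.val.toLinearMap : ↥S →ₗ[F] A) ∘ v := rfl
  rw [hcomp] at hind
  have hind2 : LinearIndependent F v := LinearIndependent.of_comp _ hind
  have hle := hind2.fintype_card_le_finrank
  rw [Fintype.card_coe] at hle
  omega

end Test3
section Test4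

open FreeAlgebra

variable {F : Type} [Field F] {A : Type} [Ring A] [Algebra F A]

lemma extract_radical (J : Ideal A) :
    ∀ {m l : List A}, m.Sublist l → (∀ x ∈ m, x ∈ J) →
      ∃ (m' : List A) (t : A), (∀ x ∈ m', x ∈ J) ∧ m'.length = m.length ∧
        l.prod = m'.prod * t := by
  intro m l h
  induction h with
  | slnil => exact fun _ => ⟨[], 1, by simp, rfl, by simp⟩
  | @cons l₁ l₂ b _ ih =>
    intro hm
    obtain ⟨m', t, hm', hlen, hp⟩ := ih hm
    cases m' with
    | nil =>
      refine ⟨[], b * t, by simp, hlen, ?_⟩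
      simp only [List.prod_cons, List.prod_nil, one_mul] at hp ⊢
      rw [hp]
    | cons y rest =>
      refine ⟨(b * y) :: rest, t, ?_, by simpa using hlen, ?_⟩
      · intro x hx
        rcases List.mem_cons.mp hx with rfl | hx
        · exact Ideal.mul_mem_left J b (hm' y (by simp))
        · exact hm' x (by simp [hx])
      · simp only [List.prod_cons] at hp ⊢
        rw [hp]
        simp only [mul_assoc]
  | @cons_cons l₁ l₂ b _ ih =>
    intro hm
    obtain ⟨m', t, hm', hlen, hp⟩ := ih (fun x hx => hm x (by simp [hx]))
    refine ⟨b :: m', t, ?_, by simp [hlen], ?_⟩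
    · intro x hx
      rcases List.mem_cons.mp hx with hxb | hx
      · subst hxb; exact hm _ List.mem_cons_self
      · exact hm' x hx
    · simp only [List.prod_cons]
      rw [hp, mul_assoc]

lemma prod_zero_of_radical_sublist {nA : ℕ} (J : Ideal A)
    (hnil : ∀ l : List A, (∀ x ∈ l, x ∈ J) → l.length = nA → l.prod = 0)
    {m l : List A} (hs : m.Sublist l) (hm : ∀ x ∈ m, x ∈ J) (hlen : m.length = nA) :
    l.prod = 0 := by
  obtain ⟨m', t, h1, h2, h3⟩ := extract_radical J hs hm
  rw [h3, hnil m' h1 (h2.trans hlen), zero_mul]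

lemma lift_expand (f : FreeAlgebra F ℕ) (u v : ℕ → A) (t : Finset ℕ) :
    (∀ i ∈ t, ∀ w ∈ supportWords F f, (FreeMonoid.toList w).count i = 1) →
    ∀ a : ℕ → A, (∀ i ∈ t, a i = u i + v i) →
    FreeAlgebra.lift F a f
      = ∑ W ∈ t.powerset,
          FreeAlgebra.lift F (fun i => if i ∈ W then u i else if i ∈ t then v i else a i) f := by
  classical
  induction t using Finset.induction_on with
  | empty =>
    intro _ a _
    simp
  | @insert j t hj ih =>
    intro hcount a ha
    have hcj : ∀ w ∈ supportWords F f, (FreeMonoid.toList w).count j = 1 :=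
      hcount j (Finset.mem_insert_self _ _)
    have h1 : a = Function.update a j (u j + v j) := by
      funext n
      by_cases hn : n = j
      · subst hn; rw [Function.update_self]; exact ha n (Finset.mem_insert_self _ _)
      · rw [Function.update_of_ne hn]
    have key : FreeAlgebra.lift F a f
        = FreeAlgebra.lift F (Function.update a j (u j)) f
          + FreeAlgebra.lift F (Function.update a j (v j)) f := by
      conv_lhs => rw [h1]
      exact lift_update_add f hcj a (u j) (v j)
    have hcount' : ∀ i ∈ t, ∀ w ∈ supportWords F f, (FreeMonoid.toList w).count i = 1 :=
      fun i hi => hcount i (Finset.mem_insert_of_mem hi)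
    have hne : ∀ i ∈ t, i ≠ j := fun i hi hc => hj (hc ▸ hi)
    have hu := ih hcount' (Function.update a j (u j))
      (fun i hi => by rw [Function.update_of_ne (hne i hi)]; exact ha i (Finset.mem_insert_of_mem hi))
    have hv := ih hcount' (Function.update a j (v j))
      (fun i hi => by rw [Function.update_of_ne (hne i hi)]; exact ha i (Finset.mem_insert_of_mem hi))
    rw [key, hu, hv, Finset.sum_powerset_insert hj]
    have e1 : ∀ W ∈ t.powerset,
        FreeAlgebra.lift F (fun i => if i ∈ W then u i else if i ∈ t then v i
          else Function.update a j (v j) i) f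
        = FreeAlgebra.lift F (fun i => if i ∈ W then u i else if i ∈ insert j t then v i
          else a i) f := by
      intro W hW
      have hjW : j ∉ W := fun hc => hj (Finset.mem_powerset.mp hW hc)
      refine congrArg (fun b => FreeAlgebra.lift F b f) (funext fun i => ?_)
      by_cases hij : i = j
      · subst hij
        simp only [hjW, if_false, hj, Finset.mem_insert_self, if_true]
        rw [Function.update_self]
      · rw [Function.update_of_ne hij]
        by_cases hiW : i ∈ W
        · simp [hiW]
        · by_cases hit : i ∈ t
          · simp [hiW, hit, Finset.mem_insert_of_mem hit]
          · have : i ∉ insert j t := by simp [hij, hit]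
            simp [hiW, hit, this]
    have e2 : ∀ W ∈ t.powerset,
        FreeAlgebra.lift F (fun i => if i ∈ W then u i else if i ∈ t then v i
          else Function.update a j (u j) i) f
        = FreeAlgebra.lift F (fun i => if i ∈ insert j W then u i
          else if i ∈ insert j t then v i else a i) f := by
      intro W hW
      have hjW : j ∉ W := fun hc => hj (Finset.mem_powerset.mp hW hc)
      refine congrArg (fun b => FreeAlgebra.lift F b f) (funext fun i => ?_)
      by_cases hij : i = j
      · subst hij
        simp only [hjW, if_false, hj, Finset.mem_insert_self, if_true]
        rw [Function.update_self]
      · rw [Function.update_of_ne hij]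
        by_cases hiW : i ∈ W
        · simp [hiW, Finset.mem_insert_of_mem hiW]
        · have hiW' : i ∉ insert j W := by simp [hij, hiW]
          by_cases hit : i ∈ t
          · simp [hiW, hiW', hit, Finset.mem_insert_of_mem hit]
          · have : i ∉ insert j t := by simp [hij, hit]
            simp [hiW, hiW', hit, this]
    rw [Finset.sum_congr rfl e1, Finset.sum_congr rfl e2]
    rw [add_comm]

end Test4

section Test5

open FreeAlgebra

variable {F : Type} [Field F] {A : Type} [Ring A] [Algebra F A]

lemma core_identity [FiniteDimensional F A] {nA : ℕ} (S : Subalgebra F A)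
    (hcompl : ∀ a : A, ∃ s ∈ S, ∃ r ∈ (⊥ : Ideal A).jacobson, a = s + r)
    (hnil : ∀ l : List A, (∀ x ∈ l, x ∈ (⊥ : Ideal A).jacobson) → l.length = nA →
      l.prod = 0)
    (f : FreeAlgebra F ℕ) (T : Fin nA → Finset ℕ)
    (hdis : ∀ a b : Fin nA, a ≠ b → Disjoint (T a) (T b))
    (hcard : ∀ b, Module.finrank F ↥S < (T b).card)
    (halt : ∀ b, AltOn F (T b) f) :
    f ∈ IdSet F A := by
  classical
  set J := (⊥ : Ideal A).jacobson with hJ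
  choose sp hsp rp hrp hdecomp using hcompl
  have main : ∀ (k : ℕ) (a : ℕ → A),
      (∀ b : Fin nA, k ≤ (b : ℕ) → ∃ i ∈ T b, a i ∈ J) →
      FreeAlgebra.lift F a f = 0 := by
    intro k
    induction k with
    | zero =>
      intro a ha
      choose g hgT hgJ using fun b => ha b (Nat.zero_le _)
      have hginj : Function.Injective g := by
        intro b b' hbb
        by_contra hne
        exact (Finset.disjoint_left.mp (hdis b b' hne) (hgT b)) (hbb ▸ hgT b')
      rw [eval_eq]
      apply Finset.sum_eq_zero
      intro w hw
      have hzero : wordEval a w = 0 := by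
        set l := FreeMonoid.toList w with hl
        set p : ℕ → Bool := fun x => decide (x ∈ Finset.image g Finset.univ) with hp
        -- each g b is in l
        have hmem : ∀ b, g b ∈ l.filter p := by
          intro b
          rw [List.mem_filter]
          constructor
          · have hc := (halt b).1 w hw (g b) (hgT b)
            exact List.count_pos_iff.mp (by rw [← hl] at hc; rw [hc]; exact Nat.one_pos)
          · simp only [hp, decide_eq_true_eq]
            exact Finset.mem_image_of_mem g (Finset.mem_univ b)
        have hnd : ((List.finRange nA).map g).Nodup :=
          (List.nodup_finRange nA).map hginj
        have hlen : nA ≤ (l.filter p).length := by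
          have hsub : (List.finRange nA).map g ⊆ l.filter p := by
            intro x hx
            obtain ⟨b, _, rfl⟩ := List.mem_map.mp hx
            exact hmem b
          have := (List.subperm_of_subset hnd hsub).length_le
          simpa using this
        -- the sublist of radical values
        have hsl : ((l.filter p).map a).take nA |>.Sublist (l.map a) := by
          refine List.Sublist.trans (List.take_sublist _ _) ?_
          exact List.Sublist.map a (List.filter_sublist (l := l))
        refine prod_zero_of_radical_sublist J hnil hsl ?_ ?_
        · intro x hx
          have hx' : x ∈ (l.filter p).map a := List.mem_of_mem_take hx
          obtain ⟨n, hn, rfl⟩ := List.mem_map.mp hx'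
          have := (List.mem_filter.mp hn).2
          simp only [hp, decide_eq_true_eq] at this
          obtain ⟨b, _, rfl⟩ := Finset.mem_image.mp this
          exact hgJ b
        · rw [List.length_take, List.length_map]
          omega
      rw [hzero, smul_zero]
    | succ k ih =>
      intro a ha
      by_cases hk : k < nA
      · set bk : Fin nA := ⟨k, hk⟩ with hbk
        have hexp := lift_expand f (fun i => rp (a i)) (fun i => sp (a i)) (T bk)
          (fun i hi => fun w hw => (halt bk).1 w hw i hi) a
          (fun i _ => by rw [add_comm]; exact hdecomp (a i))
        rw [hexp]
        apply Finset.sum_eq_zero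
        intro W hW
        rcases W.eq_empty_or_nonempty with rfl | ⟨i0, hi0⟩
        · apply lift_eq_zero_of_semisimple S (halt bk) (hcard bk)
          intro i hi
          simp only [Finset.notMem_empty, if_false, hi, if_true]
          exact hsp (a i)
        · apply ih
          intro b hb
          rcases Nat.eq_or_lt_of_le hb with heq | hlt
          · -- b = bk
            have hbbk : b = bk := by
              apply Fin.ext
              simp [hbk, ← heq]
            have hi0T : i0 ∈ T bk := Finset.mem_powerset.mp hW hi0
            refine ⟨i0, by rw [hbbk]; exact hi0T, ?_⟩
            simp only [hi0, if_true]
            exact hrp (a i0)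
          · -- k + 1 ≤ b
            obtain ⟨i, hiT, hiJ⟩ := ha b hlt
            have hbne : b ≠ bk := by
              intro hc
              rw [hc] at hlt
              simp [hbk] at hlt
            have hiTbk : i ∉ T bk :=
              fun hc => (Finset.disjoint_left.mp (hdis b bk hbne) hiT) hc
            have hiW : i ∉ W := fun hc => hiTbk (Finset.mem_powerset.mp hW hc)
            refine ⟨i, hiT, ?_⟩
            simp only [hiW, if_false, hiTbk]
            exact hiJ
      · exact ih a (fun b hb => absurd (lt_of_le_of_lt hb b.isLt) (by omega))
  intro φ
  have hφ : φ f = FreeAlgebra.lift F (fun n => φ (FreeAlgebra.ι F n)) f := by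
    have : φ = FreeAlgebra.lift F (fun n => φ (FreeAlgebra.ι F n)) := by
      apply FreeAlgebra.hom_ext
      funext n
      simp
    rw [← this]
  rw [hφ]
  exact main nA _ (fun b hb => absurd (lt_of_le_of_lt hb b.isLt) (lt_irrefl _))

end Test5

/-- Let A be a finite-dimensional F-algebra with Wedderburn–Malcev decomposition
A = Ā ⊕ J(A), Kemer index Ind(A) = (α, s) and parameter Par(A) = (d(A), n_A − 1), where
d(A) = dim_F Ā and n_A is the nilpotency index of J(A).  Then Ind(A) ≤ Par(A) in the
lexicographic order. -/
theorem stmt_17 (F : Type) [Field F] [CharZero F]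
    (A : Type) [Ring A] [Algebra F A] [FiniteDimensional F A]
    (S : Subalgebra F A) (hss : IsSemisimpleRing ↥S)
    (hcompl : ∀ a : A, ∃ s ∈ S, ∃ r ∈ (⊥ : Ideal A).jacobson, a = s + r)
    (hdisj : ∀ a ∈ S, a ∈ (⊥ : Ideal A).jacobson → a = 0)
    (nA : ℕ)
    (hnil : ∀ l : List A, (∀ x ∈ l, x ∈ (⊥ : Ideal A).jacobson) → l.length = nA →
      l.prod = 0)
    (hnA : ∃ l : List A, (∀ x ∈ l, x ∈ (⊥ : Ideal A).jacobson) ∧ l.length + 1 = nA ∧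
      l.prod ≠ 0)
    (α s : ℕ) (hKemer : KemerIndex F (IdSet F A) α s) :
    toLex (α, s) ≤ toLex (Module.finrank F ↥S, nA - 1) := by
  classical
  obtain ⟨h1, _h2, h3, _h4⟩ := hKemer
  set d := Module.finrank F ↥S with hd
  rw [Prod.Lex.toLex_le_toLex]
  rcases lt_trichotomy α d with h | h | h
  · exact Or.inl h
  · refine Or.inr ⟨h, ?_⟩
    by_contra hs
    push_neg at hs
    have hnA1 : 1 ≤ nA := by obtain ⟨l, _, hl, _⟩ := hnA; omega
    have hs' : nA ≤ s := by omega
    obtain ⟨f, hfn, _, Sf, Tf, _, hTdis, _, _, hTalt⟩ := h3 0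
    refine hfn ?_
    refine core_identity S hcompl hnil f (fun b : Fin nA => Tf (Fin.castLE hs' b))
      ?_ ?_ ?_
    · intro a b hab
      refine hTdis _ _ (fun hc => hab ?_)
      exact Fin.ext (by simpa using congrArg Fin.val hc)
    · intro b
      rw [(hTalt (Fin.castLE hs' b)).1]
      omega
    · exact fun b => (hTalt _).2
  · exfalso
    obtain ⟨f, hfn, _, Sf, Tf, hSdis, _, _, hSalt, _⟩ := h1 nA
    refine hfn ?_
    refine core_identity S hcompl hnil f Sf hSdis ?_ (fun b => (hSalt b).2)
    intro b
    rw [(hSalt b).1]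
    omega
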